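/- A connected set hits every sphere around one of its points that it exits: if E is a connected subset of a metric space, y ∈ E, and f(z) = d(y,z), then f(E) is an interval; consequently, if E contains a point at distance ≥ r from y, then H¹(E ∩ \overline{B}(y,r)) ≥ H¹(f(E ∩ \overline{B}(y,r))) = diam f(E ∩ \overline{B}(y,r)) ≥ r. In particular, every connected set E with y ∈ E and diam E ≥ r satisfies H¹(E ∩ \overline{B}(y,r)) ≥ r. -/

import Mathlib

open MeasureTheory Set Metric
open scoped MeasureTheory

lemma key_lemma {X : Type*} [MetricSpace X]
    [MeasurableSpace X] [BorelSpace X] (E : Set X) (hE : IsConnected E)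
    (y : X) (hy : y ∈ E) (r : ℝ) (hr : 0 ≤ r)
    (h : ∃ z ∈ E, r ≤ dist y z) :
    ENNReal.ofReal r ≤ (μH[1] : Measure X) (E ∩ closedBall y r) := by
  obtain ⟨z, hz, hrz⟩ := h
  set f : X → ℝ := fun x => dist y x with hf
  have hlip : LipschitzWith 1 f := LipschitzWith.dist_right y
  have hconn : IsConnected (f '' E) := hE.image f hlip.continuous.continuousOn
  have hord : OrdConnected (f '' E) := hconn.isPreconnected.ordConnected
  have hsub : Icc (0 : ℝ) r ⊆ f '' (E ∩ closedBall y r) := by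
    intro t ht
    have h0 : (0 : ℝ) ∈ f '' E := ⟨y, hy, by simp [hf]⟩
    have hz' : dist y z ∈ f '' E := ⟨z, hz, rfl⟩
    have ht' : t ∈ f '' E := hord.out h0 hz' ⟨ht.1, ht.2.trans hrz⟩
    obtain ⟨x, hx, hxt⟩ := ht'
    refine ⟨x, ⟨hx, ?_⟩, hxt⟩
    exact mem_closedBall'.mpr (le_of_eq_of_le hxt ht.2)
  calc ENNReal.ofReal r = (μH[1] : Measure ℝ) (Icc 0 r) := by
        rw [MeasureTheory.hausdorffMeasure_real, Real.volume_Icc, sub_zero]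
    _ ≤ (μH[1] : Measure ℝ) (f '' (E ∩ closedBall y r)) := measure_mono hsub
    _ ≤ ((1 : NNReal) : ENNReal) ^ (1 : ℝ) * (μH[1] : Measure X) (E ∩ closedBall y r) :=
        hlip.hausdorffMeasure_image_le zero_le_one _
    _ = (μH[1] : Measure X) (E ∩ closedBall y r) := by simp

theorem hausdorff_measure_inter_closedBall_ge {X : Type*} [MetricSpace X]
    [MeasurableSpace X] [BorelSpace X] (E : Set X) (hE : IsConnected E)
    (y : X) (hy : y ∈ E) (r : ℝ) (hr : 0 ≤ r) :
    ((∃ z ∈ E, r ≤ dist y z) →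
      ENNReal.ofReal r ≤ (μH[1] : Measure X) (E ∩ closedBall y r)) ∧
    (ENNReal.ofReal r ≤ EMetric.diam E →
      ENNReal.ofReal r ≤ (μH[1] : Measure X) (E ∩ closedBall y r)) := by
  refine ⟨key_lemma E hE y hy r hr, fun hd => ?_⟩
  by_cases hex : ∃ z ∈ E, r ≤ dist y z
  · exact key_lemma E hE y hy r hr hex
  · push_neg at hex
    have hEsub : E ⊆ closedBall y r := fun x hx =>
      mem_closedBall'.mpr (le_of_lt (hex x hx))
    have hEq : E ∩ closedBall y r = E := inter_eq_left.mpr hEsub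
    rw [hEq]
    rcases eq_or_lt_of_le hr with hr0 | hr0
    · simp [← hr0]
    have claim : ∀ r' : ℝ, 0 ≤ r' → r' < r → ENNReal.ofReal r' ≤ (μH[1] : Measure X) E := by
      intro r' hr'0 hr'r
      have hlt : ENNReal.ofReal r' < EMetric.diam E :=
        lt_of_lt_of_le (ENNReal.ofReal_lt_ofReal_iff hr0 |>.mpr hr'r) hd
      have : ¬ EMetric.diam E ≤ ENNReal.ofReal r' := not_le.mpr hlt
      rw [EMetric.diam, Metric.ediam_le_iff] at this
      push_neg at this
      obtain ⟨z, hz, w, hw, hzw⟩ := this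
      have hdist : r' ≤ dist z w := by
        rw [edist_dist] at hzw
        exact le_of_lt ((ENNReal.ofReal_lt_ofReal_iff_of_nonneg hr'0).mp hzw)
      calc ENNReal.ofReal r' ≤ (μH[1] : Measure X) (E ∩ closedBall z r') :=
            key_lemma E hE z hz r' hr'0 ⟨w, hw, hdist⟩
        _ ≤ (μH[1] : Measure X) E := measure_mono inter_subset_left
    by_contra hcon
    push_neg at hcon
    set m := (μH[1] : Measure X) E with hm
    have hmne : m ≠ ⊤ := ne_top_of_lt (hcon.trans_le le_top)
    have hmr : m.toReal < r := by
      have := ENNReal.toReal_lt_toReal hmne (by simp : ENNReal.ofReal r ≠ ⊤) |>.mpr hcon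
      rwa [ENNReal.toReal_ofReal hr] at this
    set r' := (m.toReal + r) / 2 with hr'
    have h1 : 0 ≤ r' := by positivity
    have h2 : r' < r := by rw [hr']; linarith
    have h3 : m.toReal < r' := by rw [hr']; linarith
    have h4 : ENNReal.ofReal r' ≤ m := claim r' h1 h2
    have h5 : m < ENNReal.ofReal r' := by
      rw [← ENNReal.ofReal_toReal hmne]
      exact (ENNReal.ofReal_lt_ofReal_iff_of_nonneg ENNReal.toReal_nonneg).mpr h3
    exact absurd h4 (not_le.mpr h5)
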